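/- arXiv:2306.10947 — 6 statements merged into one kernel-verified Lean document; each statement's English description precedes it below -/
import Mathlib

section
/- If ℓ is not ν-almost-everywhere equal to a constant, then J(λ) tends to +∞ as λ → ∞. -/
open MeasureTheory Filter Topology

/-- If `ℓ` is not `ν`-almost-everywhere constant, then `J(λ) → ∞` as `λ → ∞`. -/
theorem jensen_gap_tendsto_atTop
    {Ω : Type*} [MeasurableSpace Ω] (ν : Measure Ω) [IsProbabilityMeasure ν]
    (ℓ : Ω → ℝ) (hmeas : Measurable ℓ)
    (C : ℝ) (hC : 0 < C) (hbound : ∀ᵐ ω ∂ν, 0 ≤ ℓ ω ∧ ℓ ω ≤ C)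
    (J : ℝ → ℝ)
    (hJ : ∀ lam : ℝ,
      J lam = Real.log (∫ ω, Real.exp (-lam * ℓ ω) ∂ν) + lam * ∫ ω, ℓ ω ∂ν)
    (hnonconst : ¬ ∃ c : ℝ, ∀ᵐ ω ∂ν, ℓ ω = c) :
    Tendsto J atTop atTop := by
  set μ : ℝ := ∫ ω, ℓ ω ∂ν with hμ
  have hℓint : Integrable ℓ ν := by
    refine (integrable_const C).mono' hmeas.aestronglyMeasurable ?_
    filter_upwards [hbound] with ω ⟨h0, h1⟩
    simpa [Real.norm_eq_abs, abs_of_nonneg h0] using h1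
  -- find t < μ with positive mass below t
  obtain ⟨t, htμ, hpos⟩ : ∃ t : ℝ, t < μ ∧ 0 < ν {ω | ℓ ω ≤ t} := by
    by_contra h
    push_neg at h
    have hge : ∀ᵐ ω ∂ν, μ ≤ ℓ ω := by
      have hnull : ∀ n : ℕ, ν {ω | ℓ ω ≤ μ - 1/(n+1)} = 0 := by
        intro n
        have := h (μ - 1/(n+1)) (by
          have : (0:ℝ) < 1/(n+1) := by positivity
          linarith)
        exact le_antisymm (by simpa using this) bot_le
      have hz : ν {ω | ℓ ω < μ} = 0 := by
        have hsub : {ω | ℓ ω < μ} ⊆ ⋃ n : ℕ, {ω | ℓ ω ≤ μ - 1/(n+1)} := by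
          intro ω hω
          obtain ⟨n, hn⟩ := exists_nat_one_div_lt (show (0:ℝ) < μ - ℓ ω by
            simpa using sub_pos.mpr (show ℓ ω < μ from hω))
          exact Set.mem_iUnion.mpr ⟨n, by simp only [Set.mem_setOf_eq]; linarith⟩
        exact measure_mono_null hsub (measure_iUnion_null fun n => hnull n)
      have : ∀ᵐ ω ∂ν, ¬ ℓ ω < μ := (ae_iff.mpr (by simpa using hz))
      filter_upwards [this] with ω hω
      exact not_lt.mp hω
    have heq : ∀ᵐ ω ∂ν, ℓ ω - μ = 0 := by
      have hnn : 0 ≤ᵐ[ν] fun ω => ℓ ω - μ := by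
        filter_upwards [hge] with ω hω; simp only [Pi.zero_apply]; linarith
      have hint : Integrable (fun ω => ℓ ω - μ) ν := hℓint.sub (integrable_const μ)
      have hz : ∫ ω, (ℓ ω - μ) ∂ν = 0 := by
        rw [integral_sub hℓint (integrable_const μ)]
        simp [hμ]
      exact (integral_eq_zero_iff_of_nonneg_ae hnn hint).mp hz
    exact hnonconst ⟨μ, by filter_upwards [heq] with ω hω; linarith⟩
  set p : ℝ := (ν {ω | ℓ ω ≤ t}).toReal with hp
  have hpR : 0 < p := ENNReal.toReal_pos hpos.ne' (measure_ne_top ν _)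
  have hA : MeasurableSet {ω | ℓ ω ≤ t} := hmeas measurableSet_Iic
  -- lower bound
  have hlow : ∀ lam : ℝ, 0 ≤ lam → Real.log p + lam * (μ - t) ≤ J lam := by
    intro lam hlam
    have hmeasE : Measurable fun ω => Real.exp (-lam * ℓ ω) :=
      (Real.measurable_exp.comp (hmeas.const_mul (-lam)))
    have hintE : Integrable (fun ω => Real.exp (-lam * ℓ ω)) ν := by
      refine (integrable_const (1:ℝ)).mono' hmeasE.aestronglyMeasurable ?_
      filter_upwards [hbound] with ω ⟨h0, _⟩
      rw [Real.norm_eq_abs, abs_of_pos (Real.exp_pos _)]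
      exact Real.exp_le_one_iff.mpr (by nlinarith)
    have hsetle : ∫ ω in {ω | ℓ ω ≤ t}, Real.exp (-lam * ℓ ω) ∂ν
        ≤ ∫ ω, Real.exp (-lam * ℓ ω) ∂ν := by
      refine setIntegral_le_integral hintE ?_
      filter_upwards with ω
      exact (Real.exp_pos _).le
    have hconstle : p * Real.exp (-lam * t)
        ≤ ∫ ω in {ω | ℓ ω ≤ t}, Real.exp (-lam * ℓ ω) ∂ν := by
      have := setIntegral_mono_on (integrable_const (Real.exp (-lam * t))).integrableOn
        hintE.integrableOn hA (fun ω hω => by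
          simp only [Set.mem_setOf_eq] at hω
          exact Real.exp_le_exp.mpr (by nlinarith))
      simpa [setIntegral_const, hp, smul_eq_mul, measureReal_def] using this
    have hIpos : 0 < ∫ ω, Real.exp (-lam * ℓ ω) ∂ν :=
      lt_of_lt_of_le (by positivity) (hconstle.trans hsetle)
    have hlog : Real.log (p * Real.exp (-lam * t))
        ≤ Real.log (∫ ω, Real.exp (-lam * ℓ ω) ∂ν) :=
      Real.log_le_log (by positivity) (hconstle.trans hsetle)
    rw [Real.log_mul hpR.ne' (Real.exp_pos _).ne', Real.log_exp] at hlog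
    rw [hJ lam]
    have : lam * (μ - t) = -lam * t + lam * μ := by ring
    rw [this]
    linarith
  have hg : Tendsto (fun lam : ℝ => Real.log p + lam * (μ - t)) atTop atTop :=
    tendsto_atTop_add_const_left _ _ (tendsto_id.atTop_mul_const (by linarith))
  refine tendsto_atTop_mono' atTop ?_ hg
  filter_upwards [eventually_ge_atTop (0:ℝ)] with lam hlam
  exact hlow lam hlam
end

section
/- Let m = essInf ℓ. Then (1/λ)·log ∫ exp(−λ·ℓ) dν converges to −m as λ → ∞; equivalently, J(λ)/λ converges to (∫ ℓ dν) − m as λ → ∞. -/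
set_option maxHeartbeats 1000000

open MeasureTheory Filter Topology

/-- With `m = essInf ℓ`, the quantity `(1/λ)·log ∫ exp(−λℓ) dν` converges to `−m` as
`λ → ∞`; equivalently, `J(λ)/λ` converges to `(∫ ℓ dν) − m`. -/
theorem jensen_gap_div_lambda_tendsto
    {Ω : Type*} [MeasurableSpace Ω] (ν : Measure Ω) [IsProbabilityMeasure ν]
    (ℓ : Ω → ℝ) (hmeas : Measurable ℓ)
    (C : ℝ) (hC : 0 < C) (hbound : ∀ᵐ ω ∂ν, 0 ≤ ℓ ω ∧ ℓ ω ≤ C)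
    (J : ℝ → ℝ)
    (hJ : ∀ lam : ℝ,
      J lam = Real.log (∫ ω, Real.exp (-lam * ℓ ω) ∂ν) + lam * ∫ ω, ℓ ω ∂ν)
    (m : ℝ) (hm : m = essInf ℓ ν) :
    Tendsto (fun lam => (1 / lam) * Real.log (∫ ω, Real.exp (-lam * ℓ ω) ∂ν))
        atTop (𝓝 (-m)) ∧
    Tendsto (fun lam => J lam / lam) atTop (𝓝 ((∫ ω, ℓ ω ∂ν) - m)) := by
  have h0 : ∀ᵐ ω ∂ν, 0 ≤ ℓ ω := hbound.mono fun ω h => h.1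
  have hCb : ∀ᵐ ω ∂ν, ℓ ω ≤ C := hbound.mono fun ω h => h.2
  have hbdd : IsBoundedUnder (· ≥ ·) (ae ν) ℓ := ⟨0, h0⟩
  -- m ≤ ℓ a.e.
  have hmle : ∀ᵐ ω ∂ν, m ≤ ℓ ω := by
    rw [hm]; exact ae_essInf_le hbdd
  -- measurability and integrability of the exponential integrand
  have hexpmeas : ∀ lam : ℝ, Measurable fun ω => Real.exp (-lam * ℓ ω) :=
    fun lam => Real.measurable_exp.comp (measurable_const.mul hmeas)
  have hint : ∀ lam : ℝ, 0 ≤ lam → Integrable (fun ω => Real.exp (-lam * ℓ ω)) ν := by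
    intro lam hlam
    refine Integrable.mono' (integrable_const 1) (hexpmeas lam).aestronglyMeasurable ?_
    filter_upwards [h0] with ω h0ω
    rw [Real.norm_eq_abs, abs_of_pos (Real.exp_pos _)]
    exact Real.exp_le_one_iff.2 (by nlinarith)
  -- positivity of the integral
  have hpos : ∀ lam : ℝ, 0 ≤ lam → 0 < ∫ ω, Real.exp (-lam * ℓ ω) ∂ν := by
    intro lam hlam
    have : (0:ℝ) < Real.exp (-lam * C) := Real.exp_pos _
    calc (0:ℝ) < ∫ _ω, Real.exp (-lam * C) ∂ν := by
          simp only [integral_const, measure_univ, ENNReal.toReal_one, probReal_univ, one_smul]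
          positivity
      _ ≤ ∫ ω, Real.exp (-lam * ℓ ω) ∂ν := by
          refine integral_mono_ae (integrable_const _) (hint lam hlam) ?_
          filter_upwards [hCb] with ω hω
          exact Real.exp_le_exp.2 (by nlinarith)
  -- upper bound: for lam > 0, (1/lam) * log ∫ ≤ -m
  have hub : ∀ lam : ℝ, 0 < lam →
      (1 / lam) * Real.log (∫ ω, Real.exp (-lam * ℓ ω) ∂ν) ≤ -m := by
    intro lam hlam
    have hI : ∫ ω, Real.exp (-lam * ℓ ω) ∂ν ≤ Real.exp (-lam * m) := by
      calc ∫ ω, Real.exp (-lam * ℓ ω) ∂ν ≤ ∫ _ω, Real.exp (-lam * m) ∂ν := by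
            refine integral_mono_ae (hint lam hlam.le) (integrable_const _) ?_
            filter_upwards [hmle] with ω hω
            exact Real.exp_le_exp.2 (by nlinarith)
        _ = Real.exp (-lam * m) := by rw [integral_const]; simp
    have hlog : Real.log (∫ ω, Real.exp (-lam * ℓ ω) ∂ν) ≤ -lam * m := by
      calc Real.log (∫ ω, Real.exp (-lam * ℓ ω) ∂ν)
          ≤ Real.log (Real.exp (-lam * m)) := Real.log_le_log (hpos lam hlam.le) hI
        _ = -lam * m := Real.log_exp _
    rw [div_mul_eq_mul_div, one_mul, div_le_iff₀ hlam]
    nlinarith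
  -- main limit
  have hmain : Tendsto (fun lam => (1 / lam) * Real.log (∫ ω, Real.exp (-lam * ℓ ω) ∂ν))
      atTop (𝓝 (-m)) := by
    rw [tendsto_order]
    constructor
    · -- lower: ∀ a < -m, eventually a < f lam
      intro a ha
      set ε : ℝ := (-m - a) / 2 with hε
      have hεpos : 0 < ε := by simp [hε]; linarith
      set A : Set Ω := {ω | ℓ ω < m + ε} with hA
      have hAmeas : MeasurableSet A := hmeas measurableSet_Iio
      have hAne : ν A ≠ 0 := by
        intro h
        have hS : m + ε ∈ {a : ℝ | ν {ω | ℓ ω < a} = 0} := h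
        have hbddS : BddAbove {a : ℝ | ν {ω | ℓ ω < a} = 0} := by
          refine ⟨C, fun a haS => ?_⟩
          by_contra hac
          push_neg at hac
          have h1 : ∀ᵐ ω ∂ν, ℓ ω < a := hCb.mono fun ω hω => lt_of_le_of_lt hω hac
          have h2 : ν {ω | ℓ ω < a}ᶜ = 0 := by
            rw [ae_iff] at h1
            simpa [Set.compl_setOf, not_lt] using h1
          have h3 := measure_add_measure_compl (μ := ν) (hmeas measurableSet_Iio :
            MeasurableSet {ω | ℓ ω < a})
          have haS' : ν (ℓ ⁻¹' Set.Iio a) = 0 := haS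
          have h2' : ν (ℓ ⁻¹' Set.Iio a)ᶜ = 0 := h2
          rw [haS', h2', measure_univ] at h3
          simp at h3
        have hle : m + ε ≤ m := by
          conv_rhs => rw [hm, essInf_eq_sSup]
          exact le_csSup hbddS hS
        linarith
      have hAfin : ν A ≠ ⊤ := (measure_lt_top ν A).ne
      have hApos : 0 < (ν A).toReal := ENNReal.toReal_pos hAne hAfin
      -- lower bound on the integral
      have hlb : ∀ lam : ℝ, 0 < lam →
          Real.exp (-lam * (m + ε)) * (ν A).toReal ≤ ∫ ω, Real.exp (-lam * ℓ ω) ∂ν := by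
        intro lam hlam
        calc Real.exp (-lam * (m + ε)) * (ν A).toReal
            ≤ ∫ ω in A, Real.exp (-lam * ℓ ω) ∂ν := by
              refine setIntegral_ge_of_const_le_real hAmeas hAfin ?_
                ((hint lam hlam.le).integrableOn)
              intro ω hω
              exact Real.exp_le_exp.2 (by
                have : ℓ ω < m + ε := hω
                nlinarith)
          _ ≤ ∫ ω, Real.exp (-lam * ℓ ω) ∂ν := by
              refine setIntegral_le_integral (hint lam hlam.le) ?_
              filter_upwards with ω using (Real.exp_pos _).le
      -- the lower bound function tends to -(m+ε)
      have hg : Tendsto (fun lam : ℝ => Real.log ((ν A).toReal) / lam - (m + ε))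
          atTop (𝓝 (-(m + ε))) := by
        have h1 : Tendsto (fun lam : ℝ => Real.log ((ν A).toReal) / lam) atTop (𝓝 0) :=
          tendsto_const_nhds.div_atTop tendsto_id
        have := h1.sub (tendsto_const_nhds (x := m + ε))
        simpa using this
      have haε : a < -(m + ε) := by simp [hε]; linarith
      filter_upwards [hg.eventually (eventually_gt_nhds haε), eventually_gt_atTop (0:ℝ)]
        with lam hglam hlam
      have key : Real.log ((ν A).toReal) / lam - (m + ε)
          ≤ (1 / lam) * Real.log (∫ ω, Real.exp (-lam * ℓ ω) ∂ν) := by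
        have hloglb : Real.log ((ν A).toReal) + (-lam * (m + ε))
            ≤ Real.log (∫ ω, Real.exp (-lam * ℓ ω) ∂ν) := by
          have := Real.log_le_log (by positivity) (hlb lam hlam)
          rwa [Real.log_mul (Real.exp_pos _).ne' hApos.ne', Real.log_exp, add_comm] at this
        rw [div_mul_eq_mul_div, one_mul]
        calc Real.log ((ν A).toReal) / lam - (m + ε)
            = (Real.log ((ν A).toReal) + (-lam * (m + ε))) / lam := by
              field_simp; ring
          _ ≤ _ := by gcongr
      exact lt_of_lt_of_le hglam key
    · -- upper: ∀ a > -m, eventually f lam < a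
      intro a ha
      filter_upwards [eventually_gt_atTop (0:ℝ)] with lam hlam
      exact lt_of_le_of_lt (hub lam hlam) ha
  refine ⟨hmain, ?_⟩
  have heq : (fun lam => (1 / lam) * Real.log (∫ ω, Real.exp (-lam * ℓ ω) ∂ν)
      + ∫ ω, ℓ ω ∂ν) =ᶠ[atTop] fun lam => J lam / lam := by
    filter_upwards [eventually_gt_atTop (0:ℝ)] with lam hlam
    rw [hJ lam]
    field_simp
  have := (hmain.add (tendsto_const_nhds (x := ∫ ω, ℓ ω ∂ν))).congr' heq
  convert this using 2
  ring
end

section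
/- Suppose ν(ℓ = m) > 0, where m = essInf ℓ. Then log ∫ exp(−λ·ℓ) dν + λ·m converges to log ν(ℓ = m) as λ → ∞; equivalently, ∫ exp(−λ·(ℓ − m)) dν → ν(ℓ = m) > 0 as λ → ∞. -/
open MeasureTheory Filter Topology

/-- If `ν(ℓ = m) > 0` where `m = essInf ℓ`, then
`log ∫ exp(−λℓ) dν + λ·m → log ν(ℓ = m)` as `λ → ∞`; equivalently,
`∫ exp(−λ(ℓ − m)) dν → ν(ℓ = m)`. -/
theorem log_integral_exp_add_tendsto
    {Ω : Type*} [MeasurableSpace Ω] (ν : Measure Ω) [IsProbabilityMeasure ν]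
    (ℓ : Ω → ℝ) (hmeas : Measurable ℓ)
    (C : ℝ) (hC : 0 < C) (hbound : ∀ᵐ ω ∂ν, 0 ≤ ℓ ω ∧ ℓ ω ≤ C)
    (m : ℝ) (hm : m = essInf ℓ ν)
    (hmass : 0 < ν {ω | ℓ ω = m}) :
    Tendsto (fun lam => Real.log (∫ ω, Real.exp (-lam * ℓ ω) ∂ν) + lam * m)
        atTop (𝓝 (Real.log ((ν {ω | ℓ ω = m}).toReal))) ∧
    Tendsto (fun lam => ∫ ω, Real.exp (-lam * (ℓ ω - m)) ∂ν)
        atTop (𝓝 ((ν {ω | ℓ ω = m}).toReal)) ∧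
    0 < (ν {ω | ℓ ω = m}).toReal := by
  set S := {ω | ℓ ω = m} with hS
  have hSmeas : MeasurableSet S := hmeas (measurableSet_singleton m)
  have hfin : ν S ≠ ⊤ := (measure_lt_top ν S).ne
  have hpos : 0 < (ν S).toReal := ENNReal.toReal_pos hmass.ne' hfin
  -- ℓ ≥ m a.e.
  have hbdd : IsBoundedUnder (· ≥ ·) (ae ν) ℓ :=
    ⟨0, eventually_map.2 (hbound.mono fun ω hω => hω.1)⟩
  have hge : ∀ᵐ ω ∂ν, m ≤ ℓ ω := by
    rw [hm]; exact ae_essInf_le hbdd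
  have hind : ∫ ω, S.indicator (fun _ => (1:ℝ)) ω ∂ν = (ν S).toReal := by
    rw [integral_indicator_const (1:ℝ) hSmeas, smul_eq_mul, mul_one]
    rfl
  -- second tendsto
  have h2 : Tendsto (fun lam => ∫ ω, Real.exp (-lam * (ℓ ω - m)) ∂ν)
      atTop (𝓝 ((ν S).toReal)) := by
    rw [← hind]
    apply tendsto_integral_filter_of_dominated_convergence (fun _ => (1:ℝ))
    · filter_upwards with lam
      exact ((hmeas.sub measurable_const).const_mul (-lam)).exp.aestronglyMeasurable
    · filter_upwards [eventually_ge_atTop (0:ℝ)] with lam hlam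
      filter_upwards [hge] with ω hω
      rw [Real.norm_eq_abs, abs_of_pos (Real.exp_pos _)]
      exact Real.exp_le_one_iff.mpr (by nlinarith)
    · exact integrable_const 1
    · filter_upwards [hge] with ω hω
      rcases eq_or_lt_of_le hω with heq | hlt
      · have hmem : ω ∈ S := heq.symm
        simp only [Set.indicator_of_mem hmem]
        have hc : (fun lam : ℝ => Real.exp (-lam * (ℓ ω - m))) = fun _ => 1 := by
          funext lam; rw [← heq]; simp
        rw [hc]; exact tendsto_const_nhds
      · have hmem : ω ∉ S := ne_of_gt hlt
        simp only [Set.indicator_of_notMem hmem]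
        have ht : Tendsto (fun lam : ℝ => -lam * (ℓ ω - m)) atTop atBot := by
          have h := (tendsto_id (α := ℝ)).atTop_mul_const_of_neg
            (r := m - ℓ ω) (by linarith)
          exact h.congr fun x => by simp; ring
        exact Real.tendsto_exp_atBot.comp ht
  refine ⟨?_, h2, hpos⟩
  have heq : ∀ᶠ lam : ℝ in atTop,
      Real.log (∫ ω, Real.exp (-lam * (ℓ ω - m)) ∂ν)
        = Real.log (∫ ω, Real.exp (-lam * ℓ ω) ∂ν) + lam * m := by
    filter_upwards [eventually_ge_atTop (0:ℝ)] with lam hlam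
    have h1 : (fun ω => Real.exp (-lam * (ℓ ω - m)))
        = fun ω => Real.exp (lam * m) * Real.exp (-lam * ℓ ω) := by
      funext ω; rw [← Real.exp_add]; ring_nf
    have hint : Integrable (fun ω => Real.exp (-lam * ℓ ω)) ν := by
      apply Integrable.mono' (integrable_const 1)
        ((hmeas.const_mul (-lam)).exp.aestronglyMeasurable)
      filter_upwards [hbound] with ω hω
      rw [Real.norm_eq_abs, abs_of_pos (Real.exp_pos _)]
      exact Real.exp_le_one_iff.mpr (by nlinarith [hω.1])
    have hne : ∫ ω, Real.exp (-lam * ℓ ω) ∂ν ≠ 0 :=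
      (integral_exp_pos hint).ne'
    rw [h1, integral_const_mul, Real.log_mul (Real.exp_ne_zero _) hne, Real.log_exp]
    ring
  exact Tendsto.congr' heq
    ((Real.continuousAt_log hpos.ne').tendsto.comp h2)
end

section
/- Suppose ν(ℓ = m) > 0, where m = essInf ℓ. Then λ·J′(λ) − J(λ) converges to −log ν(ℓ = m) as λ → ∞, where J′(λ) = ∫ ℓ dν − (∫ ℓ·exp(−λ·ℓ) dν)/(∫ exp(−λ·ℓ) dν) is the derivative of J. Moreover λ·J′(λ) − J(λ) → 0 as λ → 0⁺. -/
open MeasureTheory Filter Topology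

set_option maxHeartbeats 1600000 in
/-- If `ν(ℓ = m) > 0` where `m = essInf ℓ`, then `λ·J′(λ) − J(λ) → −log ν(ℓ = m)` as
`λ → ∞`, where `J′(λ) = ∫ ℓ dν − (∫ ℓ·exp(−λℓ) dν)/(∫ exp(−λℓ) dν)`; moreover
`λ·J′(λ) − J(λ) → 0` as `λ → 0⁺`. -/
theorem legendre_term_tendsto
    {Ω : Type*} [MeasurableSpace Ω] (ν : Measure Ω) [IsProbabilityMeasure ν]
    (ℓ : Ω → ℝ) (hmeas : Measurable ℓ)
    (C : ℝ) (hC : 0 < C) (hbound : ∀ᵐ ω ∂ν, 0 ≤ ℓ ω ∧ ℓ ω ≤ C)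
    (J : ℝ → ℝ)
    (hJ : ∀ lam : ℝ,
      J lam = Real.log (∫ ω, Real.exp (-lam * ℓ ω) ∂ν) + lam * ∫ ω, ℓ ω ∂ν)
    (m : ℝ) (hm : m = essInf ℓ ν)
    (hmass : 0 < ν {ω | ℓ ω = m}) :
    Tendsto (fun lam =>
        lam * ((∫ ω, ℓ ω ∂ν) -
            (∫ ω, ℓ ω * Real.exp (-lam * ℓ ω) ∂ν) / (∫ ω, Real.exp (-lam * ℓ ω) ∂ν))
          - J lam)
      atTop (𝓝 (-Real.log ((ν {ω | ℓ ω = m}).toReal))) ∧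
    Tendsto (fun lam =>
        lam * ((∫ ω, ℓ ω ∂ν) -
            (∫ ω, ℓ ω * Real.exp (-lam * ℓ ω) ∂ν) / (∫ ω, Real.exp (-lam * ℓ ω) ∂ν))
          - J lam)
      (𝓝[>] (0 : ℝ)) (𝓝 0) := by
  -- basic facts
  have hml : ∀ᵐ ω ∂ν, m ≤ ℓ ω := by
    rw [hm]
    exact ae_essInf_le ⟨0, Filter.eventually_map.mpr
      (by filter_upwards [hbound] with ω h using h.1)⟩
  -- m ∈ [0, C]
  have hexS : ∃ ω, ℓ ω = m ∧ 0 ≤ ℓ ω ∧ ℓ ω ≤ C := by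
    have h1 : ∃ᵐ ω ∂ν, ℓ ω = m := by
      simp only [Filter.Frequently, MeasureTheory.ae_iff, not_not]
      simpa using hmass.ne'
    exact (h1.and_eventually hbound).exists
  obtain ⟨ω0, hω0, h0l, hlC⟩ := hexS
  have h0m : 0 ≤ m := hω0 ▸ h0l
  have hmC : m ≤ C := hω0 ▸ hlC
  -- generic integrability helper
  have integ : ∀ (f : Ω → ℝ) (B : ℝ), Measurable f → (∀ᵐ ω ∂ν, ‖f ω‖ ≤ B) →
      Integrable f ν := fun f B hf hb =>
    Integrable.mono' (integrable_const B) hf.aestronglyMeasurable hb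
  -- the expression simplifies
  have hexpr : ∀ lam : ℝ,
      lam * ((∫ ω, ℓ ω ∂ν) -
            (∫ ω, ℓ ω * Real.exp (-lam * ℓ ω) ∂ν) / (∫ ω, Real.exp (-lam * ℓ ω) ∂ν))
          - J lam
      = -(lam * ((∫ ω, ℓ ω * Real.exp (-lam * ℓ ω) ∂ν) / (∫ ω, Real.exp (-lam * ℓ ω) ∂ν)))
          - Real.log (∫ ω, Real.exp (-lam * ℓ ω) ∂ν) := by
    intro lam; rw [hJ lam]; ring
  -- integrability of the main integrands for lam ≥ 0
  have intZ : ∀ lam : ℝ, 0 ≤ lam → Integrable (fun ω => Real.exp (-lam * ℓ ω)) ν := by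
    intro lam hlam
    refine integ _ 1 (by fun_prop) ?_
    filter_upwards [hbound] with ω h
    rw [Real.norm_eq_abs, abs_of_pos (Real.exp_pos _)]
    exact Real.exp_le_one_iff.mpr (by nlinarith [h.1])
  have intA : ∀ lam : ℝ, 0 ≤ lam → Integrable (fun ω => ℓ ω * Real.exp (-lam * ℓ ω)) ν := by
    intro lam hlam
    refine integ _ C (by fun_prop) ?_
    filter_upwards [hbound] with ω h
    rw [Real.norm_eq_abs, abs_of_nonneg (mul_nonneg h.1 (Real.exp_pos _).le)]
    calc ℓ ω * Real.exp (-lam * ℓ ω) ≤ C * 1 := by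
          refine mul_le_mul h.2 (Real.exp_le_one_iff.mpr (by nlinarith [h.1])) (Real.exp_pos _).le hC.le
      _ = C := mul_one C
  constructor
  · -- atTop part
    -- shifted integrals
    set Zt : ℝ → ℝ := fun lam => ∫ ω, Real.exp (-lam * (ℓ ω - m)) ∂ν with hZt_def
    set N : ℝ → ℝ := fun lam => ∫ ω, lam * (ℓ ω - m) * Real.exp (-lam * (ℓ ω - m)) ∂ν with hN_def
    set S : Set Ω := {ω | ℓ ω = m} with hS_def
    have hSmeas : MeasurableSet S := hmeas (measurableSet_singleton m)
    set p : ℝ := (ν S).toReal with hp_def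
    have hppos : 0 < p := ENNReal.toReal_pos hmass.ne' (measure_ne_top ν S)
    have intZt : ∀ lam : ℝ, 0 ≤ lam → Integrable (fun ω => Real.exp (-lam * (ℓ ω - m))) ν := by
      intro lam hlam
      refine integ _ 1 (by fun_prop) ?_
      filter_upwards [hml] with ω h
      rw [Real.norm_eq_abs, abs_of_pos (Real.exp_pos _)]
      exact Real.exp_le_one_iff.mpr (by nlinarith)
    have intB : ∀ lam : ℝ, 0 ≤ lam →
        Integrable (fun ω => (ℓ ω - m) * Real.exp (-lam * (ℓ ω - m))) ν := by
      intro lam hlam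
      refine integ _ C (by fun_prop) ?_
      filter_upwards [hml, hbound] with ω h h2
      rw [Real.norm_eq_abs, abs_of_nonneg (mul_nonneg (by linarith) (Real.exp_pos _).le)]
      calc (ℓ ω - m) * Real.exp (-lam * (ℓ ω - m)) ≤ C * 1 := by
            refine mul_le_mul (by linarith [h2.2]) (Real.exp_le_one_iff.mpr (by nlinarith))
              (Real.exp_pos _).le hC.le
        _ = C := mul_one C
    have intAt : ∀ lam : ℝ, 0 ≤ lam →
        Integrable (fun ω => ℓ ω * Real.exp (-lam * (ℓ ω - m))) ν := by
      intro lam hlam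
      refine integ _ C (by fun_prop) ?_
      filter_upwards [hml, hbound] with ω h h2
      rw [Real.norm_eq_abs, abs_of_nonneg (mul_nonneg h2.1 (Real.exp_pos _).le)]
      calc ℓ ω * Real.exp (-lam * (ℓ ω - m)) ≤ C * 1 := by
            refine mul_le_mul h2.2 (Real.exp_le_one_iff.mpr (by nlinarith)) (Real.exp_pos _).le hC.le
        _ = C := mul_one C
    -- Zt positive
    have hZtpos : ∀ lam : ℝ, 0 ≤ lam → 0 < Zt lam := by
      intro lam hlam
      have hlow : Real.exp (-lam * (C - m)) ≤ Zt lam := by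
        rw [show Real.exp (-lam * (C - m)) = ∫ _ : Ω, Real.exp (-lam * (C - m)) ∂ν by
          simp [measure_univ]]
        refine integral_mono_ae (integrable_const _) (intZt lam hlam) ?_
        filter_upwards [hbound] with ω h
        exact Real.exp_le_exp.mpr (by nlinarith [h.2])
      exact lt_of_lt_of_le (Real.exp_pos _) hlow
    -- Zt → p
    have hZt_tendsto : Tendsto Zt atTop (𝓝 p) := by
      have hint : p = ∫ ω, S.indicator (fun _ => (1 : ℝ)) ω ∂ν := by
        rw [hp_def]; exact (integral_indicator_one hSmeas).symm
      rw [hint]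
      refine tendsto_integral_filter_of_dominated_convergence (fun _ => (1 : ℝ))
        (Eventually.of_forall fun lam => (by fun_prop : Measurable
          fun ω => Real.exp (-lam * (ℓ ω - m))).aestronglyMeasurable) ?_ (integrable_const 1) ?_
      · filter_upwards [eventually_ge_atTop (0 : ℝ)] with lam hlam
        filter_upwards [hml] with ω h
        rw [Real.norm_eq_abs, abs_of_pos (Real.exp_pos _)]
        exact Real.exp_le_one_iff.mpr (by nlinarith)
      · filter_upwards [hml] with ω h
        rcases eq_or_lt_of_le h with heq | hlt
        · have hωS : ω ∈ S := heq.symm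
          simp only [Set.indicator_of_mem hωS, ← heq, sub_self, mul_zero, Real.exp_zero]
          exact tendsto_const_nhds
        · have hωS : ω ∉ S := by simp [hS_def]; linarith
          simp only [Set.indicator_of_notMem hωS]
          have h1 : Tendsto (fun lam : ℝ => -lam * (ℓ ω - m)) atTop atBot := by
            have h0 : Tendsto (fun lam : ℝ => lam * (ℓ ω - m)) atTop atTop :=
              tendsto_id.atTop_mul_const (sub_pos.mpr hlt)
            exact (tendsto_neg_atTop_atBot.comp h0).congr fun lam => (neg_mul lam _).symm
          exact Real.tendsto_exp_atBot.comp h1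
    -- N → 0
    have hN_tendsto : Tendsto N atTop (𝓝 0) := by
      have h0 : (0 : ℝ) = ∫ _ : Ω, (0 : ℝ) ∂ν := by simp
      rw [h0]
      refine tendsto_integral_filter_of_dominated_convergence (fun _ => (1 : ℝ))
        (Eventually.of_forall fun lam => (by fun_prop : Measurable
          fun ω => lam * (ℓ ω - m) * Real.exp (-lam * (ℓ ω - m))).aestronglyMeasurable)
        ?_ (integrable_const 1) ?_
      · filter_upwards [eventually_ge_atTop (0 : ℝ)] with lam hlam
        filter_upwards [hml] with ω h
        have ht : 0 ≤ lam * (ℓ ω - m) := by nlinarith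
        have key : ∀ x : ℝ, 0 ≤ x → x * Real.exp (-x) ≤ 1 := by
          intro x hx
          have hmul : Real.exp (-x) * Real.exp x = 1 := by rw [← Real.exp_add]; simp
          nlinarith [Real.add_one_le_exp x, Real.exp_pos (-x), Real.exp_pos x]
        rw [Real.norm_eq_abs, abs_of_nonneg (mul_nonneg ht (Real.exp_pos _).le)]
        calc lam * (ℓ ω - m) * Real.exp (-lam * (ℓ ω - m))
            = lam * (ℓ ω - m) * Real.exp (-(lam * (ℓ ω - m))) := by rw [neg_mul]
          _ ≤ 1 := key _ ht
      · filter_upwards [hml] with ω h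
        rcases eq_or_lt_of_le h with heq | hlt
        · simp only [← heq, sub_self, mul_zero, zero_mul, mul_zero]
          exact tendsto_const_nhds
        · have ht : 0 < ℓ ω - m := sub_pos.mpr hlt
          have h1 : Tendsto (fun lam : ℝ => lam * (ℓ ω - m)) atTop atTop :=
            tendsto_id.atTop_mul_const ht
          have h2 := (Real.tendsto_pow_mul_exp_neg_atTop_nhds_zero 1).comp h1
          refine h2.congr fun lam => ?_
          simp only [Function.comp_apply, pow_one, neg_mul]
    -- algebraic identity, eventually
    have heq : ∀ᶠ lam in atTop, lam * ((∫ ω, ℓ ω ∂ν) -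
            (∫ ω, ℓ ω * Real.exp (-lam * ℓ ω) ∂ν) / (∫ ω, Real.exp (-lam * ℓ ω) ∂ν))
          - J lam = -(N lam / Zt lam) - Real.log (Zt lam) := by
      filter_upwards [eventually_ge_atTop (0 : ℝ)] with lam hlam
      rw [hexpr lam]
      have hZeq : (∫ ω, Real.exp (-lam * ℓ ω) ∂ν) = Real.exp (-lam * m) * Zt lam := by
        simp only [hZt_def]
        rw [← integral_const_mul]
        refine integral_congr_ae (Eventually.of_forall fun ω => ?_)
        show Real.exp (-lam * ℓ ω) = Real.exp (-lam * m) * Real.exp (-lam * (ℓ ω - m))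
        rw [← Real.exp_add]; congr 1; ring
      have hAeq : (∫ ω, ℓ ω * Real.exp (-lam * ℓ ω) ∂ν)
          = Real.exp (-lam * m) * ∫ ω, ℓ ω * Real.exp (-lam * (ℓ ω - m)) ∂ν := by
        rw [← integral_const_mul]
        refine integral_congr_ae (Eventually.of_forall fun ω => ?_)
        show ℓ ω * Real.exp (-lam * ℓ ω)
            = Real.exp (-lam * m) * (ℓ ω * Real.exp (-lam * (ℓ ω - m)))
        rw [show Real.exp (-lam * m) * (ℓ ω * Real.exp (-lam * (ℓ ω - m)))
            = ℓ ω * (Real.exp (-lam * m) * Real.exp (-lam * (ℓ ω - m))) by ring,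
          ← Real.exp_add]
        congr 2; ring
      have hAt_split : (∫ ω, ℓ ω * Real.exp (-lam * (ℓ ω - m)) ∂ν)
          = (∫ ω, (ℓ ω - m) * Real.exp (-lam * (ℓ ω - m)) ∂ν) + m * Zt lam := by
        simp only [hZt_def]
        rw [← integral_const_mul, ← integral_add (intB lam hlam)
          ((intZt lam hlam).const_mul m)]
        refine integral_congr_ae (Eventually.of_forall fun ω => ?_)
        show ℓ ω * Real.exp (-lam * (ℓ ω - m))
            = (ℓ ω - m) * Real.exp (-lam * (ℓ ω - m)) + m * Real.exp (-lam * (ℓ ω - m))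
        ring
      have hNB : N lam = lam * ∫ ω, (ℓ ω - m) * Real.exp (-lam * (ℓ ω - m)) ∂ν := by
        simp only [hN_def]
        rw [← integral_const_mul]
        refine integral_congr_ae (Eventually.of_forall fun ω => ?_)
        show lam * (ℓ ω - m) * Real.exp (-lam * (ℓ ω - m))
            = lam * ((ℓ ω - m) * Real.exp (-lam * (ℓ ω - m)))
        ring
      have hZtne : Zt lam ≠ 0 := (hZtpos lam hlam).ne'
      have hexpne : Real.exp (-lam * m) ≠ 0 := (Real.exp_pos _).ne'
      rw [hZeq, hAeq, hAt_split, hNB]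
      rw [Real.log_mul hexpne hZtne, Real.log_exp]
      field_simp
      ring
    have hfin : Tendsto (fun lam => -(N lam / Zt lam) - Real.log (Zt lam)) atTop
        (𝓝 (-(0 / p) - Real.log p)) :=
      ((hN_tendsto.div hZt_tendsto hppos.ne').neg).sub
        ((Real.continuousAt_log hppos.ne').tendsto.comp hZt_tendsto)
    have hval : -(0 / p) - Real.log p = -Real.log p := by simp
    rw [hval] at hfin
    exact Tendsto.congr' (heq.mono fun lam h => h.symm) hfin
  · -- 𝓝[>] 0 part
    have hZ_tendsto : Tendsto (fun lam => ∫ ω, Real.exp (-lam * ℓ ω) ∂ν) (𝓝[>] (0:ℝ))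
        (𝓝 1) := by
      have h1 : (1 : ℝ) = ∫ _ : Ω, (1 : ℝ) ∂ν := by simp
      rw [h1]
      refine tendsto_integral_filter_of_dominated_convergence (fun _ => (1 : ℝ))
        (Eventually.of_forall fun lam => (by fun_prop : Measurable
          fun ω => Real.exp (-lam * ℓ ω)).aestronglyMeasurable) ?_ (integrable_const 1) ?_
      · filter_upwards [self_mem_nhdsWithin] with lam hlam
        filter_upwards [hbound] with ω h
        rw [Real.norm_eq_abs, abs_of_pos (Real.exp_pos _)]
        exact Real.exp_le_one_iff.mpr (by nlinarith [h.1, Set.mem_setOf_eq ▸ hlam])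
      · refine Eventually.of_forall fun ω => ?_
        have hc : Continuous fun lam : ℝ => Real.exp (-lam * ℓ ω) :=
          Real.continuous_exp.comp (continuous_neg.mul continuous_const)
        have h0 : Tendsto (fun lam : ℝ => Real.exp (-lam * ℓ ω)) (𝓝 0) (𝓝 1) := by
          simpa using hc.tendsto 0
        exact h0.mono_left nhdsWithin_le_nhds
    have hA_tendsto : Tendsto (fun lam => ∫ ω, ℓ ω * Real.exp (-lam * ℓ ω) ∂ν) (𝓝[>] (0:ℝ))
        (𝓝 (∫ ω, ℓ ω ∂ν)) := by
      refine tendsto_integral_filter_of_dominated_convergence (fun _ => C)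
        (Eventually.of_forall fun lam => (by fun_prop : Measurable
          fun ω => ℓ ω * Real.exp (-lam * ℓ ω)).aestronglyMeasurable) ?_ (integrable_const C) ?_
      · filter_upwards [self_mem_nhdsWithin] with lam hlam
        filter_upwards [hbound] with ω h
        have hlam0 : (0:ℝ) < lam := hlam
        rw [Real.norm_eq_abs, abs_of_nonneg (mul_nonneg h.1 (Real.exp_pos _).le)]
        calc ℓ ω * Real.exp (-lam * ℓ ω) ≤ C * 1 := by
              refine mul_le_mul h.2 (Real.exp_le_one_iff.mpr (by nlinarith [h.1]))
                (Real.exp_pos _).le hC.le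
          _ = C := mul_one C
      · refine Eventually.of_forall fun ω => ?_
        have hc : Continuous fun lam : ℝ => ℓ ω * Real.exp (-lam * ℓ ω) :=
          continuous_const.mul (Real.continuous_exp.comp (continuous_neg.mul continuous_const))
        have h0 : Tendsto (fun lam : ℝ => ℓ ω * Real.exp (-lam * ℓ ω)) (𝓝 0) (𝓝 (ℓ ω)) := by
          simpa using hc.tendsto 0
        exact h0.mono_left nhdsWithin_le_nhds
    have hlam_tendsto : Tendsto (fun lam : ℝ => lam) (𝓝[>] (0:ℝ)) (𝓝 0) :=
      tendsto_id.mono_left nhdsWithin_le_nhds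
    have key : Tendsto (fun lam =>
        -(lam * ((∫ ω, ℓ ω * Real.exp (-lam * ℓ ω) ∂ν) / (∫ ω, Real.exp (-lam * ℓ ω) ∂ν)))
          - Real.log (∫ ω, Real.exp (-lam * ℓ ω) ∂ν)) (𝓝[>] (0:ℝ))
        (𝓝 (-(0 * ((∫ ω, ℓ ω ∂ν) / 1)) - Real.log 1)) := by
      exact ((hlam_tendsto.mul (hA_tendsto.div hZ_tendsto one_ne_zero)).neg).sub
        ((Real.continuousAt_log one_ne_zero).tendsto.comp hZ_tendsto)
    simp only [zero_mul, neg_zero, Real.log_one, sub_zero] at key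
    refine Tendsto.congr (fun lam => (hexpr lam).symm) key
end

section
/- Suppose ν(ℓ = m) > 0, where m = essInf ℓ, and let s be a real number with 0 < s < −log ν(ℓ = m). Then the infimum over λ > 0 of (J(λ) + s)/λ is attained: there exists a finite λ⋆ > 0 such that (J(λ⋆) + s)/λ⋆ = inf_{λ > 0} (J(λ) + s)/λ. -/
open MeasureTheory Filter Topology

/-- If `ν(ℓ = m) > 0` where `m = essInf ℓ`, and `0 < s < −log ν(ℓ = m)`, then the infimum
over `λ > 0` of `(J(λ) + s)/λ` is attained at some finite `λ⋆ > 0`. -/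
theorem inf_rate_attained
    {Ω : Type*} [MeasurableSpace Ω] (ν : Measure Ω) [IsProbabilityMeasure ν]
    (ℓ : Ω → ℝ) (hmeas : Measurable ℓ)
    (C : ℝ) (hC : 0 < C) (hbound : ∀ᵐ ω ∂ν, 0 ≤ ℓ ω ∧ ℓ ω ≤ C)
    (J : ℝ → ℝ)
    (hJ : ∀ lam : ℝ,
      J lam = Real.log (∫ ω, Real.exp (-lam * ℓ ω) ∂ν) + lam * ∫ ω, ℓ ω ∂ν)
    (m : ℝ) (hm : m = essInf ℓ ν)
    (hmass : 0 < ν {ω | ℓ ω = m})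
    (s : ℝ) (hs : 0 < s) (hs' : s < -Real.log ((ν {ω | ℓ ω = m}).toReal)) :
    ∃ lamstar : ℝ, 0 < lamstar ∧
      IsLeast {y : ℝ | ∃ lam : ℝ, 0 < lam ∧ y = (J lam + s) / lam}
        ((J lamstar + s) / lamstar) := by
  classical
  set A : Set Ω := {ω | ℓ ω = m} with hA_def
  have hA : MeasurableSet A := hmeas (measurableSet_singleton m)
  set p : ℝ := (ν A).toReal with hp_def
  have hp : 0 < p := ENNReal.toReal_pos hmass.ne' (measure_ne_top ν A)
  have hlogp : Real.log p < -s := by linarith [neg_lt_neg hs']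
  have h0 : ∀ᵐ ω ∂ν, 0 ≤ ℓ ω := hbound.mono fun ω h => h.1
  have hCb : ∀ᵐ ω ∂ν, ℓ ω ≤ C := hbound.mono fun ω h => h.2
  have hmle : ∀ᵐ ω ∂ν, m ≤ ℓ ω := by
    rw [hm]; exact ae_essInf_le ⟨0, h0⟩
  set μint : ℝ := ∫ ω, ℓ ω ∂ν with hμ_def
  set I : ℝ → ℝ := fun lam => ∫ ω, Real.exp (-lam * ℓ ω) ∂ν with hI_def
  -- measurability
  have hmeasI : ∀ lam : ℝ, AEStronglyMeasurable (fun ω => Real.exp (-lam * ℓ ω)) ν :=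
    fun lam => ((hmeas.const_mul (-lam)).exp).aestronglyMeasurable
  have hexp_bd : ∀ lam : ℝ, ∀ ω : Ω, 0 ≤ ℓ ω → ℓ ω ≤ C →
      -lam * ℓ ω ≤ |lam| * C := by
    intro lam ω h1 h2
    have e1 : -lam * ℓ ω ≤ |lam| * ℓ ω :=
      mul_le_mul_of_nonneg_right (neg_le_abs lam) h1
    have e2 : |lam| * ℓ ω ≤ |lam| * C :=
      mul_le_mul_of_nonneg_left h2 (abs_nonneg lam)
    linarith
  have hexp_lo : ∀ lam : ℝ, ∀ ω : Ω, 0 ≤ ℓ ω → ℓ ω ≤ C →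
      -(|lam| * C) ≤ -lam * ℓ ω := by
    intro lam ω h1 h2
    have e1 : -|lam| * ℓ ω ≤ -lam * ℓ ω :=
      mul_le_mul_of_nonneg_right (neg_le_neg (le_abs_self lam)) h1
    have e2 : -|lam| * C ≤ -|lam| * ℓ ω :=
      mul_le_mul_of_nonpos_left h2 (neg_nonpos.2 (abs_nonneg lam))
    linarith
  -- integrability
  have hInt : ∀ lam : ℝ, Integrable (fun ω => Real.exp (-lam * ℓ ω)) ν := by
    intro lam
    refine (integrable_const (Real.exp (|lam| * C))).mono' (hmeasI lam) ?_
    filter_upwards [h0, hCb] with ω h1 h2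
    rw [Real.norm_eq_abs, Real.abs_exp]
    exact Real.exp_le_exp.2 (hexp_bd lam ω h1 h2)
  -- positivity
  have hIpos : ∀ lam : ℝ, 0 < I lam := by
    intro lam
    have hle : (fun _ : Ω => Real.exp (-(|lam| * C))) ≤ᵐ[ν] fun ω => Real.exp (-lam * ℓ ω) := by
      filter_upwards [h0, hCb] with ω h1 h2
      exact Real.exp_le_exp.2 (hexp_lo lam ω h1 h2)
    have h2 := integral_mono_ae (integrable_const _) (hInt lam) hle
    have h3 : ∫ _ : Ω, Real.exp (-(|lam| * C)) ∂ν = Real.exp (-(|lam| * C)) := by simp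
    rw [h3] at h2
    exact lt_of_lt_of_le (Real.exp_pos _) h2
  -- continuity of I
  have hIcont : Continuous I := by
    rw [continuous_iff_continuousAt]
    intro x₀
    refine continuousAt_of_dominated (bound := fun _ => Real.exp ((|x₀| + 1) * C))
      (Eventually.of_forall fun lam => hmeasI lam) ?_ (integrable_const _) ?_
    · have hev : ∀ᶠ lam in 𝓝 x₀, |lam| ≤ |x₀| + 1 := by
        have hball : ∀ᶠ lam in 𝓝 x₀, lam ∈ Metric.ball x₀ 1 :=
          Metric.ball_mem_nhds x₀ one_pos
        filter_upwards [hball] with lam hlam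
        have h1 : |lam - x₀| < 1 := by simpa [Real.dist_eq] using hlam
        calc |lam| = |lam - x₀ + x₀| := by ring_nf
          _ ≤ |lam - x₀| + |x₀| := abs_add_le _ _
          _ ≤ |x₀| + 1 := by linarith
      filter_upwards [hev] with lam hlam
      filter_upwards [h0, hCb] with ω h1 h2
      rw [Real.norm_eq_abs, Real.abs_exp]
      refine Real.exp_le_exp.2 (le_trans (hexp_bd lam ω h1 h2) ?_)
      nlinarith [abs_nonneg lam, abs_nonneg x₀]
    · refine Eventually.of_forall fun ω => ?_
      exact (Real.continuous_exp.comp ((continuous_neg.mul continuous_const))).continuousAt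
  -- J explicit and continuity
  have hJcont : Continuous J := by
    rw [funext hJ]
    refine Continuous.add ?_ (continuous_id.mul continuous_const)
    rw [continuous_iff_continuousAt]
    intro x
    exact (Real.continuousAt_log (hIpos x).ne').comp hIcont.continuousAt
  have hJ0 : J 0 = 0 := by
    rw [hJ 0]; simp
  -- lower bound on I : p * exp(-lam*m) ≤ I lam
  have hIlow : ∀ lam : ℝ, p * Real.exp (-lam * m) ≤ I lam := by
    intro lam
    have h1 : ∫ ω in A, Real.exp (-lam * ℓ ω) ∂ν = p * Real.exp (-lam * m) := by
      have h1' : ∫ ω in A, Real.exp (-lam * ℓ ω) ∂ν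
          = ∫ _ω in A, Real.exp (-lam * m) ∂ν := by
        refine setIntegral_congr_fun hA fun ω hω => ?_
        simp only [hA_def, Set.mem_setOf_eq] at hω
        rw [hω]
      rw [h1', setIntegral_const, smul_eq_mul]
      rfl
    have h2 : ∫ ω in A, Real.exp (-lam * ℓ ω) ∂ν ≤ I lam :=
      setIntegral_le_integral (hInt lam)
        (Eventually.of_forall fun ω => (Real.exp_pos _).le)
    linarith [h1 ▸ h2]
  have hloglow : ∀ lam : ℝ, Real.log p + -lam * m ≤ Real.log (I lam) := by
    intro lam
    have hll := Real.log_le_log (by positivity) (hIlow lam)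
    rwa [Real.log_mul hp.ne' (Real.exp_pos _).ne', Real.log_exp] at hll
  -- the key limit : ∫ exp(lam*(m-ℓ)) → p
  have hg : Tendsto (fun lam : ℝ => ∫ ω, Real.exp (lam * (m - ℓ ω)) ∂ν) atTop (𝓝 p) := by
    have hlim : Tendsto (fun lam : ℝ => ∫ ω, Real.exp (lam * (m - ℓ ω)) ∂ν) atTop
        (𝓝 (∫ ω, A.indicator (1 : Ω → ℝ) ω ∂ν)) := by
      refine tendsto_integral_filter_of_dominated_convergence (fun _ => (1 : ℝ))
        (Eventually.of_forall fun lam =>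
          ((hmeas.const_sub m).const_mul lam).exp.aestronglyMeasurable) ?_
        (integrable_const _) ?_
      · filter_upwards [eventually_ge_atTop (0 : ℝ)] with lam hlam
        filter_upwards [hmle] with ω hω
        rw [Real.norm_eq_abs, Real.abs_exp]
        exact Real.exp_le_one_iff.2 (by nlinarith)
      · filter_upwards [hmle] with ω hω
        rcases eq_or_lt_of_le hω with heq | hlt
        · have heq' : ℓ ω = m := heq.symm
          simp only [Set.indicator, hA_def, Set.mem_setOf_eq, heq', if_true, Pi.one_apply]
          simp [← heq]
        · have hne : ℓ ω ≠ m := ne_of_gt hlt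
          simp only [Set.indicator, hA_def, Set.mem_setOf_eq, hne, if_false]
          have h1 : Tendsto (fun lam : ℝ => lam * (m - ℓ ω)) atTop atBot :=
            tendsto_id.atTop_mul_const_of_neg (by linarith)
          exact Real.tendsto_exp_atBot.comp h1
    rwa [integral_indicator_one hA] at hlim
  -- rewrite : ∫ exp(lam*(m-ℓ)) = exp(lam*m) * I lam
  have hgeq : ∀ lam : ℝ, ∫ ω, Real.exp (lam * (m - ℓ ω)) ∂ν = Real.exp (lam * m) * I lam := by
    intro lam
    rw [hI_def]
    rw [← integral_const_mul]
    congr 1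
    funext ω
    rw [← Real.exp_add]
    ring_nf
  -- find Λ₀ with (J Λ₀ + s)/Λ₀ < μint - m
  have hloggtends : Tendsto (fun lam : ℝ => lam * m + Real.log (I lam)) atTop
      (𝓝 (Real.log p)) := by
    have hcomp := (Real.continuousAt_log hp.ne').tendsto.comp hg
    simp only [Function.comp_def] at hcomp
    have heq : (fun lam : ℝ => Real.log (∫ ω, Real.exp (lam * (m - ℓ ω)) ∂ν))
        = fun lam : ℝ => lam * m + Real.log (I lam) := by
      funext lam
      rw [hgeq lam, Real.log_mul (Real.exp_pos _).ne' (hIpos lam).ne', Real.log_exp]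
    rwa [heq] at hcomp
  obtain ⟨Λ₀, hΛ₀⟩ : ∃ lam : ℝ, 1 ≤ lam ∧ lam * m + Real.log (I lam) < -s := by
    have h1 : ∀ᶠ lam : ℝ in atTop, lam * m + Real.log (I lam) < -s :=
      hloggtends.eventually_lt_const hlogp
    exact ((eventually_ge_atTop (1:ℝ)).and h1).exists
  have hΛ₀pos : 0 < Λ₀ := lt_of_lt_of_le one_pos hΛ₀.1
  set K : ℝ := (J Λ₀ + s) / Λ₀ with hK_def
  have hK : K < μint - m := by
    rw [hK_def, div_lt_iff₀ hΛ₀pos, hJ Λ₀]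
    nlinarith [hΛ₀.2]
  -- lower bound on f for all lam > 0
  have hflow : ∀ lam : ℝ, 0 < lam →
      (μint - m) + (Real.log p + s) / lam ≤ (J lam + s) / lam := by
    intro lam hlam
    rw [hJ lam, le_div_iff₀ hlam]
    have hdm : (Real.log p + s) / lam * lam = Real.log p + s :=
      div_mul_cancel₀ _ hlam.ne'
    nlinarith [hloglow lam]
  -- eventual lower bound at infinity
  set B₀ : ℝ := (Real.log p + s) / (K - (μint - m)) with hB₀_def
  have hnum : Real.log p + s < 0 := by linarith
  have hden : K - (μint - m) < 0 := by linarith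
  have hB₀pos : 0 < B₀ := div_pos_of_neg_of_neg hnum hden
  have hBbound : ∀ lam : ℝ, B₀ ≤ lam → K ≤ (J lam + s) / lam := by
    intro lam hlam
    have hlampos : 0 < lam := lt_of_lt_of_le hB₀pos hlam
    have h1 : K - (μint - m) ≤ (Real.log p + s) / lam := by
      rw [le_div_iff₀ hlampos]
      have h2 : (K - (μint - m)) * B₀ = Real.log p + s := by
        rw [hB₀_def, mul_comm, div_mul_cancel₀ _ hden.ne]
      nlinarith [mul_le_mul_of_nonpos_left hlam hden.le]
    linarith [hflow lam hlampos]
  -- behavior near 0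
  have hJtends : Tendsto J (𝓝 0) (𝓝 0) := by
    simpa [hJ0] using hJcont.tendsto 0
  have hev : ∀ᶠ lam : ℝ in 𝓝 0, -(s/2) < J lam :=
    hJtends.eventually_const_lt (by linarith)
  obtain ⟨δ, hδpos, hδ⟩ := Metric.eventually_nhds_iff.1 hev
  set a : ℝ := min (δ/2) (min Λ₀ (s / (2 * (|K| + 1)))) with ha_def
  have hapos : 0 < a :=
    lt_min (by linarith) (lt_min hΛ₀pos (by positivity))
  have haΛ : a ≤ Λ₀ := le_trans (min_le_right _ _) (min_le_left _ _)
  have hsmall : ∀ lam : ℝ, 0 < lam → lam < a → K ≤ (J lam + s) / lam := by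
    intro lam hlam hlt
    have hd : dist lam (0:ℝ) < δ := by
      rw [Real.dist_eq, sub_zero, abs_of_pos hlam]
      have : a ≤ δ/2 := min_le_left _ _
      linarith
    have h1 : -(s/2) < J lam := hδ hd
    rw [le_div_iff₀ hlam]
    have hKa : K * lam ≤ |K| * lam := mul_le_mul_of_nonneg_right (le_abs_self K) hlam.le
    have hlt2 : lam ≤ s / (2 * (|K| + 1)) := by
      have : a ≤ s / (2 * (|K| + 1)) := le_trans (min_le_right _ _) (min_le_right _ _)
      linarith
    have h3 : |K| * lam ≤ |K| * (s / (2 * (|K| + 1))) :=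
      mul_le_mul_of_nonneg_left hlt2 (abs_nonneg K)
    have hq : s / (2 * (|K| + 1)) * (2 * (|K| + 1)) = s :=
      div_mul_cancel₀ _ (by positivity)
    have hqnn : 0 ≤ s / (2 * (|K| + 1)) := by positivity
    have h4 : |K| * (s / (2 * (|K| + 1))) ≤ s / 2 := by
      nlinarith [abs_nonneg K]
    linarith
  -- compact minimization
  set B : ℝ := max Λ₀ B₀ with hB_def
  have haB : a ≤ B := le_trans haΛ (le_max_left _ _)
  have hfc : ContinuousOn (fun lam => (J lam + s) / lam) (Set.Icc a B) := by
    refine ContinuousOn.div ((hJcont.add continuous_const).continuousOn) continuousOn_id ?_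
    intro x hx
    exact ne_of_gt (lt_of_lt_of_le hapos hx.1)
  obtain ⟨lamstar, hmem, hmin⟩ :=
    isCompact_Icc.exists_isMinOn (Set.nonempty_Icc.2 haB) hfc
  have hlspos : 0 < lamstar := lt_of_lt_of_le hapos hmem.1
  have hΛmem : Λ₀ ∈ Set.Icc a B := ⟨haΛ, le_max_left _ _⟩
  have hstar_le_K : (J lamstar + s) / lamstar ≤ K := hmin hΛmem
  refine ⟨lamstar, hlspos, ⟨lamstar, hlspos, rfl⟩, ?_⟩
  rintro y ⟨lam, hlam, rfl⟩
  rcases lt_or_ge lam a with hcase | hcase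
  · exact le_trans hstar_le_K (hsmall lam hlam hcase)
  · rcases le_or_gt lam B with hcase2 | hcase2
    · exact hmin ⟨hcase, hcase2⟩
    · have hBl : B₀ ≤ lam := le_trans (le_max_right _ _) hcase2.le
      exact le_trans hstar_le_K (hBbound lam hBl)
end

section
/- Let ν be a probability measure on a measurable space Z, Θ a measurable space, and ℓ : Θ × Z → ℝ measurable with 0 ≤ ℓ(θ, z) ≤ C for all θ and ν-a.e. z. Define L(θ) = ∫ ℓ(θ, z) dν(z), J(θ, λ) = log ∫ exp(−λ·ℓ(θ, z)) dν(z) + λ·L(θ), and m(θ) = essInf_z ℓ(θ, z). Let π be a probability measure on Θ, n > 0, and let ρ be a probability measure on Θ with KL(ρ‖π) < ∞ and with θ ↦ L(θ) and θ ↦ m(θ) ρ-integrable. Then, as λ → ∞, the quantity ∫ L dρ + (1/(nλ))·KL(ρ‖π) + (1/λ)·∫ J(θ, λ) dρ(θ) converges to ∫ L dρ + ∫ (L(θ) − m(θ)) dρ(θ); in particular, if m(θ) = 0 ρ-almost surely, the limit equals 2·∫ L dρ. -/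
open MeasureTheory Filter Topology

section Aux

variable {Z : Type*} [MeasurableSpace Z] {ν : Measure Z} [IsProbabilityMeasure ν]
  {f : Z → ℝ} {C : ℝ}

lemma exp_integrable (hf : Measurable f) (hb : ∀ᵐ z ∂ν, 0 ≤ f z ∧ f z ≤ C)
    {lam : ℝ} (hlam : 0 ≤ lam) :
    Integrable (fun z => Real.exp (-lam * f z)) ν := by
  refine (integrable_const (1:ℝ)).mono' ((hf.const_mul (-lam)).exp).aestronglyMeasurable ?_
  filter_upwards [hb] with z hz
  rw [Real.norm_eq_abs, abs_of_pos (Real.exp_pos _)]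
  exact Real.exp_le_one_iff.2 (by nlinarith [hz.1])

lemma exp_int_ge (hf : Measurable f) (hb : ∀ᵐ z ∂ν, 0 ≤ f z ∧ f z ≤ C)
    {lam : ℝ} (hlam : 0 ≤ lam) :
    Real.exp (-lam * C) ≤ ∫ z, Real.exp (-lam * f z) ∂ν := by
  calc Real.exp (-lam * C) = ∫ _z, Real.exp (-lam * C) ∂ν := by simp
  _ ≤ ∫ z, Real.exp (-lam * f z) ∂ν := by
      refine integral_mono_ae (integrable_const _) (exp_integrable hf hb hlam) ?_
      filter_upwards [hb] with z hz
      exact Real.exp_le_exp.2 (by nlinarith [hz.2])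

lemma exp_int_le_one (hf : Measurable f) (hb : ∀ᵐ z ∂ν, 0 ≤ f z ∧ f z ≤ C)
    {lam : ℝ} (hlam : 0 ≤ lam) :
    ∫ z, Real.exp (-lam * f z) ∂ν ≤ 1 := by
  calc ∫ z, Real.exp (-lam * f z) ∂ν ≤ ∫ _z, (1:ℝ) ∂ν := by
        refine integral_mono_ae (exp_integrable hf hb hlam) (integrable_const _) ?_
        filter_upwards [hb] with z hz
        exact Real.exp_le_one_iff.2 (by nlinarith [hz.1])
  _ = 1 := by simp

lemma le_essInf_aux (c : ℝ) (hub : ∀ᵐ z ∂ν, f z ≤ C) (h : ∀ᵐ z ∂ν, c ≤ f z) :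
    c ≤ essInf f ν := by
  have hne : (ae ν).NeBot := ae_neBot.2 (IsProbabilityMeasure.ne_zero ν)
  exact Filter.le_liminf_of_le (Filter.isCoboundedUnder_ge_of_eventually_le _ hub) h

set_option maxHeartbeats 1000000 in
lemma laplace_tendsto (hf : Measurable f) (hC : 0 < C)
    (hb : ∀ᵐ z ∂ν, 0 ≤ f z ∧ f z ≤ C) :
    Tendsto (fun lam : ℝ => (1 / lam) * Real.log (∫ z, Real.exp (-lam * f z) ∂ν))
      atTop (𝓝 (-(essInf f ν))) := by
  set m := essInf f ν with hmdef
  have hbdd : IsBoundedUnder (· ≥ ·) (ae ν) f := ⟨0, hb.mono fun z h => h.1⟩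
  have hmf : ∀ᵐ z ∂ν, m ≤ f z := ae_essInf_le hbdd
  have hIle : ∀ lam : ℝ, 0 ≤ lam →
      ∫ z, Real.exp (-lam * f z) ∂ν ≤ Real.exp (-lam * m) := by
    intro lam hlam
    calc ∫ z, Real.exp (-lam * f z) ∂ν ≤ ∫ _z, Real.exp (-lam * m) ∂ν := by
          refine integral_mono_ae (exp_integrable hf hb hlam) (integrable_const _) ?_
          filter_upwards [hmf] with z hz
          exact Real.exp_le_exp.2 (by nlinarith)
    _ = Real.exp (-lam * m) := by simp
  have hIpos : ∀ lam : ℝ, 0 ≤ lam → 0 < ∫ z, Real.exp (-lam * f z) ∂ν := fun lam hlam =>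
    lt_of_lt_of_le (Real.exp_pos _) (exp_int_ge hf hb hlam)
  refine tendsto_order.2 ⟨?_, ?_⟩
  · intro a ha
    have hε : 0 < (-m - a) / 3 := by linarith
    set ε := (-m - a) / 3 with hεdef
    set A := {z | f z < m + ε} with hAdef
    have hAne : ν A ≠ 0 := by
      intro h0
      have hAe : (fun _ : Z => m + ε) ≤ᵐ[ν] f := by
        rw [EventuallyLE, ae_iff]
        simpa [hAdef, not_le] using h0
      have : m + ε ≤ m := le_essInf_aux (C := C) (m + ε) (hb.mono fun z h => h.2) hAe
      linarith
    have hAt : 0 < (ν A).toReal :=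
      ENNReal.toReal_pos hAne (measure_ne_top _ _)
    have hAm : MeasurableSet A := measurableSet_lt hf measurable_const
    have hlog0 : Tendsto (fun lam : ℝ => Real.log ((ν A).toReal) / lam) atTop (𝓝 0) :=
      tendsto_const_nhds.div_atTop tendsto_id
    have hev : ∀ᶠ lam : ℝ in atTop, Real.log ((ν A).toReal) / lam > -ε :=
      hlog0.eventually (eventually_gt_nhds (by linarith))
    filter_upwards [eventually_gt_atTop (0:ℝ), hev] with lam hlam hevl
    -- lower bound on the integral
    have hlb : (ν A).toReal * Real.exp (-lam * (m + ε)) ≤ ∫ z, Real.exp (-lam * f z) ∂ν := by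
      have h1 : ∫ z in A, Real.exp (-lam * (m + ε)) ∂ν ≤ ∫ z in A, Real.exp (-lam * f z) ∂ν := by
        refine setIntegral_mono_on (integrableOn_const (measure_ne_top _ _) enorm_ne_top)
          ((exp_integrable hf hb hlam.le).integrableOn) hAm ?_
        intro z hz
        exact Real.exp_le_exp.2 (by have := hz; simp only [hAdef, Set.mem_setOf_eq] at this; nlinarith)
      have h2 : ∫ z in A, Real.exp (-lam * f z) ∂ν ≤ ∫ z, Real.exp (-lam * f z) ∂ν :=
        setIntegral_le_integral (exp_integrable hf hb hlam.le)
          (ae_of_all _ fun z => (Real.exp_pos _).le)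
      have h0 : ∫ z in A, Real.exp (-lam * (m + ε)) ∂ν = (ν A).toReal * Real.exp (-lam * (m + ε)) := by
        rw [setIntegral_const, smul_eq_mul]; rfl
      linarith
    have hloglb : Real.log ((ν A).toReal) + (-lam * (m + ε)) ≤
        Real.log (∫ z, Real.exp (-lam * f z) ∂ν) := by
      have := Real.log_le_log (by positivity) hlb
      rwa [Real.log_mul (ne_of_gt hAt) (ne_of_gt (Real.exp_pos _)), Real.log_exp] at this
    have h1lam : 0 < 1 / lam := by positivity
    have : Real.log ((ν A).toReal) / lam - (m + ε) ≤
        (1 / lam) * Real.log (∫ z, Real.exp (-lam * f z) ∂ν) := by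
      have := mul_le_mul_of_nonneg_left hloglb h1lam.le
      calc Real.log ((ν A).toReal) / lam - (m + ε)
          = (1 / lam) * (Real.log ((ν A).toReal) + (-lam * (m + ε))) := by
            field_simp
            ring
      _ ≤ (1 / lam) * Real.log (∫ z, Real.exp (-lam * f z) ∂ν) := this
    have : -ε - (m + ε) < (1 / lam) * Real.log (∫ z, Real.exp (-lam * f z) ∂ν) := by
      linarith
    calc a = -m - 3 * ε := by rw [hεdef]; ring
    _ < -ε - (m + ε) := by linarith
    _ < _ := this
  · intro a ha
    filter_upwards [eventually_ge_atTop (1:ℝ)] with lam hlam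
    have hlam0 : 0 < lam := lt_of_lt_of_le one_pos hlam
    have hlog : Real.log (∫ z, Real.exp (-lam * f z) ∂ν) ≤ -lam * m := by
      have := Real.log_le_log (hIpos lam hlam0.le) (hIle lam hlam0.le)
      rwa [Real.log_exp] at this
    have : (1 / lam) * Real.log (∫ z, Real.exp (-lam * f z) ∂ν) ≤ (1 / lam) * (-lam * m) :=
      mul_le_mul_of_nonneg_left hlog (by positivity)
    have heq : (1 / lam) * (-lam * m) = -m := by field_simp
    calc (1 / lam) * Real.log (∫ z, Real.exp (-lam * f z) ∂ν) ≤ -m := by rw [heq] at this; exact this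
    _ < a := ha

end Aux

/-- The Kullback–Leibler divergence `∫ log(dρ/dπ) dρ` (as a real number, meaningful when
`ρ ≪ π` and the integrand is `ρ`-integrable). -/
noncomputable def realKL {Θ : Type*} [MeasurableSpace Θ] (ρ π : Measure Θ) : ℝ :=
  ∫ θ, Real.log ((ρ.rnDeriv π θ).toReal) ∂ρ

set_option maxHeartbeats 1000000 in
/-- As `λ → ∞`, the PAC-Bayes objective
`∫ L dρ + (1/(nλ))·KL(ρ‖π) + (1/λ)·∫ J(θ,λ) dρ(θ)` converges to
`∫ L dρ + ∫ (L − m) dρ`; in particular, if `m = 0` `ρ`-a.s. the limit is `2·∫ L dρ`. -/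
theorem objective_tendsto_atTop
    {Z Θ : Type*} [MeasurableSpace Z] [MeasurableSpace Θ]
    (ν : Measure Z) [IsProbabilityMeasure ν] (π : Measure Θ) [IsProbabilityMeasure π]
    (ℓ : Θ → Z → ℝ) (hmeas : Measurable (Function.uncurry ℓ))
    (C : ℝ) (hC : 0 < C) (hb : ∀ θ, ∀ᵐ z ∂ν, 0 ≤ ℓ θ z ∧ ℓ θ z ≤ C)
    (L : Θ → ℝ) (hL : ∀ θ, L θ = ∫ z, ℓ θ z ∂ν)
    (Jf : Θ → ℝ → ℝ)
    (hJ : ∀ θ lam, Jf θ lam =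
      Real.log (∫ z, Real.exp (-lam * ℓ θ z) ∂ν) + lam * L θ)
    (m : Θ → ℝ) (hm : ∀ θ, m θ = essInf (ℓ θ) ν)
    (n : ℝ) (hn : 0 < n)
    (ρ : Measure Θ) [IsProbabilityMeasure ρ] (hac : ρ ≪ π)
    (hKL : Integrable (fun θ => Real.log ((ρ.rnDeriv π θ).toReal)) ρ)
    (hLint : Integrable L ρ) (hmint : Integrable m ρ) :
    Tendsto (fun lam =>
        (∫ θ, L θ ∂ρ) + (1 / (n * lam)) * realKL ρ π + (1 / lam) * ∫ θ, Jf θ lam ∂ρ)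
      atTop (𝓝 ((∫ θ, L θ ∂ρ) + ∫ θ, (L θ - m θ) ∂ρ)) ∧
    ((∀ᵐ θ ∂ρ, m θ = 0) →
      Tendsto (fun lam =>
          (∫ θ, L θ ∂ρ) + (1 / (n * lam)) * realKL ρ π + (1 / lam) * ∫ θ, Jf θ lam ∂ρ)
        atTop (𝓝 (2 * ∫ θ, L θ ∂ρ))) := by
  have hℓθ : ∀ θ, Measurable (ℓ θ) := fun θ => hmeas.comp measurable_prodMk_left
  -- the family of integrands
  set F : ℝ → Θ → ℝ := fun lam θ => (1 / lam) * Jf θ lam with hFdef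
  -- pointwise limit
  have h_lim : ∀ θ, Tendsto (fun lam => F lam θ) atTop (𝓝 (L θ - m θ)) := by
    intro θ
    have h1 := laplace_tendsto (hℓθ θ) hC (hb θ)
    have h2 : Tendsto (fun lam : ℝ =>
        (1 / lam) * Real.log (∫ z, Real.exp (-lam * ℓ θ z) ∂ν) + L θ) atTop
        (𝓝 (-(essInf (ℓ θ) ν) + L θ)) := h1.add_const _
    have heq : -(essInf (ℓ θ) ν) + L θ = L θ - m θ := by rw [hm]; ring
    rw [heq] at h2
    refine h2.congr' ?_
    filter_upwards [eventually_gt_atTop (0:ℝ)] with lam hlam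
    show (1 / lam) * Real.log _ + L θ = (1 / lam) * Jf θ lam
    rw [hJ, mul_add]
    congr 1
    field_simp
  -- measurability
  have hF_meas : ∀ lam : ℝ, AEStronglyMeasurable (F lam) ρ := by
    intro lam
    have hsm : StronglyMeasurable fun θ => ∫ z, Real.exp (-lam * ℓ θ z) ∂ν := by
      have h : StronglyMeasurable fun p : Θ × Z => Real.exp (-lam * Function.uncurry ℓ p) :=
        ((hmeas.const_mul (-lam)).exp).stronglyMeasurable
      exact h.integral_prod_right'
    have h1 : AEStronglyMeasurable
        (fun θ => Real.log (∫ z, Real.exp (-lam * ℓ θ z) ∂ν)) ρ :=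
      (Real.measurable_log.comp hsm.measurable).aestronglyMeasurable
    refine ((h1.add (hLint.aestronglyMeasurable.const_mul lam)).const_mul (1/lam)).congr ?_
    filter_upwards with θ
    rw [hFdef]
    simp only [Pi.add_apply]
    rw [hJ]
  -- uniform bound
  have h_bound : ∀ᶠ lam : ℝ in atTop, ∀ᵐ θ ∂ρ, ‖F lam θ‖ ≤ C + |L θ| := by
    filter_upwards [eventually_ge_atTop (1:ℝ)] with lam hlam
    refine ae_of_all _ fun θ => ?_
    have hlam0 : 0 < lam := lt_of_lt_of_le one_pos hlam
    set I := ∫ z, Real.exp (-lam * ℓ θ z) ∂ν with hIdef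
    have hIpos : 0 < I :=
      lt_of_lt_of_le (Real.exp_pos _) (exp_int_ge (hℓθ θ) (hb θ) hlam0.le)
    have hIle1 : I ≤ 1 := exp_int_le_one (hℓθ θ) (hb θ) hlam0.le
    have hlogub : Real.log I ≤ 0 := Real.log_nonpos hIpos.le hIle1
    have hloglb : -lam * C ≤ Real.log I := by
      have := Real.log_le_log (Real.exp_pos _) (exp_int_ge (hℓθ θ) (hb θ) hlam0.le)
      rwa [Real.log_exp] at this
    have habs : |Real.log I| ≤ lam * C := by
      rw [abs_le]
      constructor <;> nlinarith
    have hFval : F lam θ = (1 / lam) * Real.log I + L θ := by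
      show (1 / lam) * Jf θ lam = _
      rw [hJ, mul_add, ← hIdef]
      congr 1
      field_simp
    rw [hFval, Real.norm_eq_abs]
    calc |(1 / lam) * Real.log I + L θ| ≤ |(1 / lam) * Real.log I| + |L θ| := abs_add_le _ _
    _ ≤ C + |L θ| := by
        have : |(1 / lam) * Real.log I| = (1 / lam) * |Real.log I| := by
          rw [abs_mul, abs_of_pos (by positivity : (0:ℝ) < 1 / lam)]
        rw [this]
        have h2 : (1 / lam) * |Real.log I| ≤ (1 / lam) * (lam * C) :=
          mul_le_mul_of_nonneg_left habs (by positivity)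
        have h3 : (1 / lam) * (lam * C) = C := by field_simp
        linarith
  have hbound_int : Integrable (fun θ => C + |L θ|) ρ :=
    (integrable_const C).add hLint.abs
  have htend3 : Tendsto (fun lam => ∫ θ, F lam θ ∂ρ) atTop
      (𝓝 (∫ θ, (L θ - m θ) ∂ρ)) :=
    tendsto_integral_filter_of_dominated_convergence (fun θ => C + |L θ|)
      (Eventually.of_forall hF_meas) h_bound hbound_int (ae_of_all _ h_lim)
  have hFint : ∀ lam : ℝ, ∫ θ, F lam θ ∂ρ = (1 / lam) * ∫ θ, Jf θ lam ∂ρ := by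
    intro lam
    exact integral_const_mul _ _
  have htend3' : Tendsto (fun lam : ℝ => (1 / lam) * ∫ θ, Jf θ lam ∂ρ) atTop
      (𝓝 (∫ θ, (L θ - m θ) ∂ρ)) := by
    refine htend3.congr fun lam => hFint lam
  have htend2 : Tendsto (fun lam : ℝ => (1 / (n * lam)) * realKL ρ π) atTop (𝓝 0) := by
    have h1 : Tendsto (fun lam : ℝ => n * lam) atTop atTop :=
      Tendsto.const_mul_atTop hn tendsto_id
    have h2 : Tendsto (fun lam : ℝ => 1 / (n * lam)) atTop (𝓝 0) :=
      tendsto_const_nhds.div_atTop h1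
    have := h2.mul_const (realKL ρ π)
    rwa [zero_mul] at this
  have hmain : Tendsto (fun lam =>
      (∫ θ, L θ ∂ρ) + (1 / (n * lam)) * realKL ρ π + (1 / lam) * ∫ θ, Jf θ lam ∂ρ)
      atTop (𝓝 ((∫ θ, L θ ∂ρ) + ∫ θ, (L θ - m θ) ∂ρ)) := by
    have hc : Tendsto (fun _ : ℝ => ∫ θ, L θ ∂ρ) atTop (𝓝 (∫ θ, L θ ∂ρ)) :=
      tendsto_const_nhds
    have := (hc.add htend2).add htend3'
    simpa using this
  refine ⟨hmain, fun h0 => ?_⟩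
  have heq : ∫ θ, (L θ - m θ) ∂ρ = ∫ θ, L θ ∂ρ := by
    refine integral_congr_ae ?_
    filter_upwards [h0] with θ hθ
    rw [hθ, sub_zero]
  rw [heq] at hmain
  have : (∫ θ, L θ ∂ρ) + ∫ θ, L θ ∂ρ = 2 * ∫ θ, L θ ∂ρ := by ring
  rwa [this] at hmain
end
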